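/- Let G be a group, C ≥ 0 a real number, and f : G → ℝ a function satisfying: (i) |f(xy) − f(x) − f(y)| ≤ C for all x, y ∈ G; (ii) f(xⁿ) = n·f(x) for all x ∈ G and all integers n; (iii) f(xyx⁻¹) = f(y) for all x, y ∈ G. Suppose z ∈ G, n ≥ 1, g ≥ 1, and zⁿ is a product of g commutators, i.e. zⁿ = ∏_{i=1}^g [x_i, y_i] for some x_i, y_i ∈ G. Then n·|f(z)| ≤ 4·C·g. -/

import Mathlib

open scoped commutatorElement

lemma qm_list_bound {G : Type*} [Group G] (C : ℝ) (f : G → ℝ)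
    (hone : f 1 = 0)
    (hqm : ∀ x y : G, |f (x * y) - f x - f y| ≤ C) :
    ∀ l : List G, (∀ a ∈ l, |f a| ≤ C) → |f l.prod| ≤ 2 * l.length * C := by
  intro l
  induction l with
  | nil => simp [hone]
  | cons a l ih =>
    intro h
    have ha : |f a| ≤ C := h a (by simp)
    have hl : |f l.prod| ≤ 2 * l.length * C := ih fun b hb => h b (by simp [hb])
    have h1 := hqm a l.prod
    have : |f (a * l.prod)| ≤ |f (a * l.prod) - f a - f l.prod| + |f a| + |f l.prod| := by
      have := abs_sub_abs_le_abs_sub (f (a * l.prod)) (f a + f l.prod)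
      have := abs_add_le (f a) (f l.prod)
      have h3 : f (a * l.prod) = (f (a * l.prod) - f a - f l.prod) + f a + f l.prod := by ring
      calc |f (a * l.prod)| = |(f (a * l.prod) - f a - f l.prod) + f a + f l.prod| := by rw [← h3]
        _ ≤ |f (a * l.prod) - f a - f l.prod| + |f a| + |f l.prod| := by
            exact (abs_add_le _ _).trans (add_le_add (abs_add_le _ _) le_rfl)
    simp only [List.prod_cons, List.length_cons]
    calc |f (a * l.prod)| ≤ C + C + 2 * l.length * C := by
          linarith
      _ = 2 * ((l.length + 1 : ℕ) : ℝ) * C := by push_cast; ring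
    
/-- If `f : G → ℝ` is a homogeneous quasimorphism with defect at most `C` which is a
class function, and `zⁿ` is a product of `g` commutators, then `n⬝|f z| ≤ 4⬝C⬝g`. -/
theorem quasimorphism_genus_bound {G : Type*} [Group G] (C : ℝ) (hC : 0 ≤ C)
    (f : G → ℝ)
    (hqm : ∀ x y : G, |f (x * y) - f x - f y| ≤ C)
    (hhom : ∀ (x : G) (n : ℤ), f (x ^ n) = n * f x)
    (hclass : ∀ x y : G, f (x * y * x⁻¹) = f y)
    (z : G) (n g : ℕ) (hn : 1 ≤ n) (hg : 1 ≤ g)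
    (x y : Fin g → G)
    (hz : z ^ n = (List.ofFn fun i : Fin g => ⁅x i, y i⁆).prod) :
    (n : ℝ) * |f z| ≤ 4 * C * g := by
  have hone : f 1 = 0 := by simpa using hhom 1 0
  have hinv : ∀ a : G, f a⁻¹ = -f a := by
    intro a; simpa using hhom a (-1)
  have hcomm : ∀ a b : G, |f ⁅a, b⁆| ≤ C := by
    intro a b
    have h1 := hqm (a * b * a⁻¹) b⁻¹
    rw [hclass a b, hinv b] at h1
    have : ⁅a, b⁆ = a * b * a⁻¹ * b⁻¹ := commutatorElement_def a b
    rw [this]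
    calc |f (a * b * a⁻¹ * b⁻¹)| = |f (a * b * a⁻¹ * b⁻¹) - f b - -f b| := by ring_nf
      _ ≤ C := h1
  have hlist := qm_list_bound C f hone hqm (List.ofFn fun i : Fin g => ⁅x i, y i⁆)
    (by intro a ha
        simp only [List.mem_ofFn] at ha
        obtain ⟨i, rfl⟩ := ha
        exact hcomm _ _)
  rw [← hz] at hlist
  have hzn : f (z ^ n) = n * f z := by
    have := hhom z n
    simpa using this
  rw [hzn] at hlist
  simp only [List.length_ofFn] at hlist
  have : (n:ℝ) * |f z| ≤ |(n:ℝ) * f z| := by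
    rw [abs_mul, Nat.abs_cast]
  calc (n:ℝ) * |f z| ≤ |(n:ℝ) * f z| := this
    _ ≤ 2 * g * C := hlist
    _ ≤ 4 * C * g := by nlinarith [hC, (by exact_mod_cast hg : (1:ℝ) ≤ g)]
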